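/- There exists a constant c ≥ 1, independent of d, such that for all d ≥ 3, all real L ≥ d and all x ∈ Z^d, the simple random walk on Z^d satisfies P_x[H_{B(0,L)} < ∞] ≤ (cL/|x|)^{d−2} ∧ 1, where H_{B(0,L)} is the entrance time of the closed Euclidean ball B(0,L). -/

import Mathlib

open MeasureTheory Filter

abbrev Zd (d : ℕ) := Fin d → ℤ

/-- The unit step in direction `i`, with sign `s` (`true` = `+1`). -/
def dir (d : ℕ) (i : Fin d) (s : Bool) : Zd d :=
  fun j => if j = i then (if s then 1 else -1) else 0

/-- ℓ¹-norm on ℤ^d. -/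
def norm1 {d : ℕ} (x : Zd d) : ℕ := ∑ j, (x j).natAbs

/-- ℓ∞-norm on ℤ^d. -/
def normInf {d : ℕ} (x : Zd d) : ℕ := Finset.univ.sup fun j => (x j).natAbs

/-- Euclidean norm on ℤ^d. -/
noncomputable def euclid {d : ℕ} (x : Zd d) : ℝ := Real.sqrt (∑ j, ((x j : ℝ)) ^ 2)

/-- Nearest-neighbor adjacency on ℤ^d. -/
def adjZ {d : ℕ} (x y : Zd d) : Prop := norm1 (x - y) = 1

-- `hitProb d K n x` is the probability that simple random walk started at `x`
-- enters `K` within the first `n` steps.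
open Classical in
noncomputable def hitProb (d : ℕ) (K : Set (Zd d)) : ℕ → Zd d → ℝ
  | 0, x => if x ∈ K then 1 else 0
  | n + 1, x => if x ∈ K then 1
      else (2 * d : ℝ)⁻¹ * ∑ i : Fin d, ∑ s : Bool, hitProb d K n (x + dir d i s)

/-- `P_x[H_K < ∞]`, the probability that the walk ever enters `K`. -/
noncomputable def hitProbInfty (d : ℕ) (K : Set (Zd d)) (x : Zd d) : ℝ :=
  ⨆ n : ℕ, hitProb d K n x

/-- Closed Euclidean ball of radius `L` around the origin in ℤ^d. -/
def ballE (d : ℕ) (L : ℝ) : Set (Zd d) := {x | euclid x ≤ L}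

/-! ### Auxiliary analytic lemmas -/

section AnalyticAux

open Real Set

lemma nonneg_of_deriv {T : ℝ} {F F' : ℝ → ℝ}
    (hd : ∀ t ∈ Icc (0:ℝ) T, HasDerivAt F (F' t) t)
    (h0 : 0 ≤ F 0) (hF' : ∀ t ∈ Icc (0:ℝ) T, 0 ≤ F' t) :
    ∀ t ∈ Icc (0:ℝ) T, 0 ≤ F t := by
  intro t ht
  have hmono : MonotoneOn F (Icc 0 T) := by
    refine monotoneOn_of_deriv_nonneg (convex_Icc 0 T)
      (fun y hy => (hd y hy).continuousAt.continuousWithinAt) ?_ ?_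
    · intro y hy
      exact (hd y (interior_subset hy)).differentiableAt.differentiableWithinAt
    · intro y hy
      rw [(hd y (interior_subset hy)).deriv]
      exact hF' y (interior_subset hy)
  exact h0.trans (hmono ⟨le_refl 0, ht.1.trans ht.2⟩ ht ht.1)

lemma hasDerivAt_plus (A r t : ℝ) (h : 0 < A + t) :
    HasDerivAt (fun u => (A + u) ^ r) (r * (A + t) ^ (r - 1)) t := by
  have h1 : HasDerivAt (fun u : ℝ => A + u) 1 t := (hasDerivAt_id t).const_add A
  have h2 := (Real.hasDerivAt_rpow_const (x := A + t) (p := r) (Or.inl h.ne')).comp t h1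
  simp only [mul_one] at h2
  exact h2

lemma hasDerivAt_minus (A r t : ℝ) (h : 0 < A - t) :
    HasDerivAt (fun u => (A - u) ^ r) (-(r * (A - t) ^ (r - 1))) t := by
  have h1 : HasDerivAt (fun u : ℝ => A - u) (-1) t := (hasDerivAt_id t).const_sub A
  have h2 := (Real.hasDerivAt_rpow_const (x := A - t) (p := r) (Or.inl h.ne')).comp t h1
  rw [show -(r * (A - t) ^ (r - 1)) = r * (A - t) ^ (r - 1) * -1 by ring]
  exact h2

lemma quartic {p A T t : ℝ} (hp : p < 0) (hT : 0 ≤ T) (hTA : T < A)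
    (ht : |t| ≤ T) :
    (A + t) ^ p + (A - t) ^ p ≤
      2 * A ^ p + p * (p - 1) * A ^ (p - 2) * t ^ 2 +
        p * (p - 1) * (p - 2) * (p - 3) / 12 * (A - T) ^ (p - 4) * t ^ 4 := by
  have hA : 0 < A := hT.trans_lt hTA
  have hAT : 0 < A - T := by linarith
  set b : ℝ := p * (p - 1) * A ^ (p - 2) with hbdef
  set C : ℝ := p * (p - 1) * (p - 2) * (p - 3) / 12 * (A - T) ^ (p - 4) with hCdef
  have h01 : 0 < p * (p - 1) := mul_pos_of_neg_of_neg hp (by linarith)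
  have h23 : 0 < (p - 2) * (p - 3) := mul_pos_of_neg_of_neg (by linarith) (by linarith)
  have hc4 : 0 < p * (p - 1) * (p - 2) * (p - 3) := by nlinarith
  have hC : 0 < C := by
    rw [hCdef]
    have := Real.rpow_pos_of_pos hAT (p - 4)
    positivity
  have hAu : ∀ u ∈ Icc (0:ℝ) T, 0 < A + u := fun u hu => by
    have := hu.1; linarith
  have hAmu : ∀ u ∈ Icc (0:ℝ) T, 0 < A - u := fun u hu => by
    have := hu.2; linarith
  have step4 : ∀ u ∈ Icc (0:ℝ) T,
      0 ≤ 24 * C - (p * (p-1) * (p-2) * (p-3) * (A + u) ^ (p - 4)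
        + p * (p-1) * (p-2) * (p-3) * (A - u) ^ (p - 4)) := by
    intro u hu
    have h1 : (A + u) ^ (p - 4) ≤ (A - T) ^ (p - 4) :=
      Real.rpow_le_rpow_of_nonpos hAT (by linarith [hu.1]) (by linarith)
    have h2 : (A - u) ^ (p - 4) ≤ (A - T) ^ (p - 4) :=
      Real.rpow_le_rpow_of_nonpos hAT (by linarith [hu.2]) (by linarith)
    have e : 24 * C = 2 * (p * (p-1) * (p-2) * (p-3)) * (A - T) ^ (p - 4) := by
      rw [hCdef]; ring
    nlinarith [mul_le_mul_of_nonneg_left h1 hc4.le, mul_le_mul_of_nonneg_left h2 hc4.le]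
  have step3 : ∀ u ∈ Icc (0:ℝ) T,
      0 ≤ 24 * C * u - (p * (p-1) * (p-2) * (A + u) ^ (p - 3)
        - p * (p-1) * (p-2) * (A - u) ^ (p - 3)) := by
    refine nonneg_of_deriv (F' := fun u => 24 * C - (p * (p-1) * (p-2) * (p-3) * (A + u) ^ (p - 4)
        + p * (p-1) * (p-2) * (p-3) * (A - u) ^ (p - 4))) ?_ ?_ step4
    · intro u hu
      have d1 := (hasDerivAt_plus A (p - 3) u (hAu u hu)).const_mul (p * (p-1) * (p-2))
      have d2 := (hasDerivAt_minus A (p - 3) u (hAmu u hu)).const_mul (p * (p-1) * (p-2))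
      have d0 : HasDerivAt (fun u : ℝ => 24 * C * u) (24 * C) u := by
        simpa using (hasDerivAt_id u).const_mul (24 * C)
      have := d0.sub (d1.sub d2)
      refine this.congr_deriv ?_
      rw [show p - 3 - 1 = p - 4 by ring]
      ring
    · norm_num
  have step2 : ∀ u ∈ Icc (0:ℝ) T,
      0 ≤ 2 * b + 12 * C * u ^ 2 - (p * (p-1) * (A + u) ^ (p - 2)
        + p * (p-1) * (A - u) ^ (p - 2)) := by
    refine nonneg_of_deriv (F' := fun u => 24 * C * u - (p * (p-1) * (p-2) * (A + u) ^ (p - 3)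
        - p * (p-1) * (p-2) * (A - u) ^ (p - 3))) ?_ ?_ step3
    · intro u hu
      have d1 := (hasDerivAt_plus A (p - 2) u (hAu u hu)).const_mul (p * (p-1))
      have d2 := (hasDerivAt_minus A (p - 2) u (hAmu u hu)).const_mul (p * (p-1))
      have d0 : HasDerivAt (fun u : ℝ => 2 * b + 12 * C * u ^ 2) (24 * C * u) u := by
        have := ((hasDerivAt_pow 2 u).const_mul (12 * C)).const_add (2 * b)
        refine this.congr_deriv ?_
        ring
      have := d0.sub (d1.add d2)
      refine this.congr_deriv ?_
      rw [show p - 2 - 1 = p - 3 by ring]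
      ring
    · have : (A + 0 : ℝ) = A := by ring
      rw [this, show (A - 0 : ℝ) = A by ring, hbdef]
      ring_nf
      norm_num
  have step1 : ∀ u ∈ Icc (0:ℝ) T,
      0 ≤ 2 * b * u + 4 * C * u ^ 3 - (p * (A + u) ^ (p - 1)
        - p * (A - u) ^ (p - 1)) := by
    refine nonneg_of_deriv (F' := fun u => 2 * b + 12 * C * u ^ 2 - (p * (p-1) * (A + u) ^ (p - 2)
        + p * (p-1) * (A - u) ^ (p - 2))) ?_ ?_ step2
    · intro u hu
      have d1 := (hasDerivAt_plus A (p - 1) u (hAu u hu)).const_mul p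
      have d2 := (hasDerivAt_minus A (p - 1) u (hAmu u hu)).const_mul p
      have d0 : HasDerivAt (fun u : ℝ => 2 * b * u + 4 * C * u ^ 3) (2 * b + 12 * C * u ^ 2) u := by
        have h1 : HasDerivAt (fun u : ℝ => 2 * b * u) (2 * b) u := by
          simpa using (hasDerivAt_id u).const_mul (2 * b)
        have h2 := (hasDerivAt_pow 3 u).const_mul (4 * C)
        have := h1.add h2
        refine this.congr_deriv ?_
        ring
      have := d0.sub (d1.sub d2)
      refine this.congr_deriv ?_
      rw [show p - 1 - 1 = p - 2 by ring]
      ring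
    · norm_num
  have step0 : ∀ u ∈ Icc (0:ℝ) T,
      0 ≤ 2 * A ^ p + b * u ^ 2 + C * u ^ 4 - ((A + u) ^ p + (A - u) ^ p) := by
    refine nonneg_of_deriv (F' := fun u => 2 * b * u + 4 * C * u ^ 3 - (p * (A + u) ^ (p - 1)
        - p * (A - u) ^ (p - 1))) ?_ ?_ step1
    · intro u hu
      have d1 := hasDerivAt_plus A p u (hAu u hu)
      have d2 := hasDerivAt_minus A p u (hAmu u hu)
      have d0 : HasDerivAt (fun u : ℝ => 2 * A ^ p + b * u ^ 2 + C * u ^ 4)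
          (2 * b * u + 4 * C * u ^ 3) u := by
        have h1 := ((hasDerivAt_pow 2 u).const_mul b).const_add (2 * A ^ p)
        have h2 := (hasDerivAt_pow 4 u).const_mul C
        have := h1.add h2
        refine this.congr_deriv ?_
        ring
      have := d0.sub (d1.add d2)
      refine this.congr_deriv ?_
      ring
    · norm_num
      linarith
  rcases le_total 0 t with h | h
  · have := step0 t ⟨h, by rwa [abs_of_nonneg h] at ht⟩
    linarith
  · have := step0 (-t) ⟨by linarith, by rwa [abs_of_nonpos h] at ht⟩
    have e1 : A + -t = A - t := by ring
    have e2 : A - -t = A + t := by ring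
    have e3 : (-t) ^ 2 = t ^ 2 := by ring
    have e4 : (-t) ^ 4 = t ^ 4 := by ring
    rw [e1, e2, e3, e4] at this
    linarith

lemma gain {p s : ℝ} (hp : p < 0) (hs : 0 < s) :
    (s + 1) ^ p - p * (s + 1) ^ (p - 1) ≤ s ^ p := by
  have key : ∀ u ∈ Icc (0:ℝ) 1,
      0 ≤ (s + 1 - u) ^ p + (p * (s + 1) ^ (p - 1) * u - (s + 1) ^ p) := by
    refine nonneg_of_deriv
      (F' := fun u => -(p * (s + 1 - u) ^ (p - 1)) + p * (s + 1) ^ (p - 1)) ?_ ?_ ?_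
    · intro u hu
      have hpos : 0 < s + 1 - u := by have := hu.2; linarith
      have d1 := hasDerivAt_minus (s + 1) p u hpos
      have d2 : HasDerivAt (fun u : ℝ => p * (s + 1) ^ (p - 1) * u - (s + 1) ^ p)
          (p * (s + 1) ^ (p - 1)) u := by
        simpa using ((hasDerivAt_id u).const_mul (p * (s + 1) ^ (p - 1))).sub_const ((s + 1) ^ p)
      exact d1.add d2
    · norm_num
    · intro u hu
      have hpos : 0 < s + 1 - u := by have := hu.2; linarith
      have h1 : (s + 1) ^ (p - 1) ≤ (s + 1 - u) ^ (p - 1) :=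
        Real.rpow_le_rpow_of_nonpos hpos (by have := hu.1; linarith) (by linarith)
      show 0 ≤ -(p * (s + 1 - u) ^ (p - 1)) + p * (s + 1) ^ (p - 1)
      nlinarith [mul_le_mul_of_nonpos_left h1 hp.le]
  have := key 1 ⟨by norm_num, le_refl 1⟩
  have e : s + 1 - 1 = s := by ring
  rw [e] at this
  linarith

lemma rpow_ratio {B A r : ℝ} (hB : 0 < B) (hBA : B ≤ A) (hr : 0 ≤ r)
    (n : ℕ) (hrn : r ≤ (n : ℝ)) (h2 : (n : ℝ) * (A - B) ≤ A / 2) :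
    A ^ r ≤ 2 * B ^ r := by
  have hA : 0 < A := hB.trans_le hBA
  have hq1 : B / A ≤ 1 := (div_le_one hA).2 hBA
  have hq0 : 0 < B / A := div_pos hB hA
  have h3 : (B / A) ^ (n : ℝ) ≤ (B / A) ^ r :=
    Real.rpow_le_rpow_of_exponent_ge hq0 hq1 hrn
  have hx : 0 ≤ (A - B) / A := div_nonneg (by linarith) hA.le
  have hd1 : (A - B) / A ≤ 1 := (div_le_one hA).2 (by linarith)
  have bern := one_add_mul_le_pow (a := -((A - B) / A)) (by linarith) n
  have e : 1 + -((A - B) / A) = B / A := by field_simp; ring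
  rw [e] at bern
  have hnx : (n : ℝ) * ((A - B) / A) ≤ 1 / 2 := by
    have e2 : (n : ℝ) * ((A - B) / A) = ((n : ℝ) * (A - B)) / A := by ring
    rw [e2, div_le_iff₀ hA]
    linarith
  have h4 : (1 : ℝ) / 2 ≤ (B / A) ^ (n : ℕ) := by
    have e3 : 1 + (n : ℝ) * -((A - B) / A) = 1 - (n : ℝ) * ((A - B) / A) := by ring
    rw [e3] at bern
    linarith
  have h5 : (B / A) ^ (n : ℝ) = (B / A) ^ (n : ℕ) := Real.rpow_natCast _ n
  have h6 : (1 : ℝ) / 2 ≤ (B / A) ^ r := by rw [← h5] at h4; linarith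
  have h7 : B ^ r = A ^ r * (B / A) ^ r := by
    rw [← Real.mul_rpow hA.le (le_of_lt hq0)]
    congr 1
    field_simp
  have hArpos : 0 < A ^ r := Real.rpow_pos_of_pos hA r
  nlinarith [mul_le_mul_of_nonneg_left h6 hArpos.le]

end AnalyticAux

/-! ### The superharmonic comparison function -/

noncomputable def Sq {d : ℕ} (x : Zd d) : ℝ := ∑ j, ((x j : ℝ)) ^ 2

lemma Sq_nonneg {d : ℕ} (x : Zd d) : 0 ≤ Sq x :=
  Finset.sum_nonneg fun _ _ => sq_nonneg _

lemma euclid_eq_sqrt_Sq {d : ℕ} (x : Zd d) : euclid x = Real.sqrt (Sq x) := rfl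

lemma Sq_add_dir_true {d : ℕ} (i : Fin d) (x : Zd d) :
    Sq (x + dir d i true) = Sq x + 2 * ((x i : ℝ)) + 1 := by
  classical
  have h : ∀ j : Fin d, (((x + dir d i true) j : ℝ)) ^ 2
      = ((x j : ℝ)) ^ 2 + (if j = i then 2 * ((x i : ℝ)) + 1 else 0) := by
    intro j
    by_cases hj : j = i
    · subst hj
      simp only [Pi.add_apply, dir, if_pos rfl, if_true]
      push_cast
      ring
    · simp [Pi.add_apply, dir, hj]
  unfold Sq
  rw [Finset.sum_congr rfl fun j _ => h j, Finset.sum_add_distrib,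
    Finset.sum_ite_eq' Finset.univ i, if_pos (Finset.mem_univ i)]
  ring

lemma Sq_add_dir_false {d : ℕ} (i : Fin d) (x : Zd d) :
    Sq (x + dir d i false) = Sq x - 2 * ((x i : ℝ)) + 1 := by
  classical
  have h : ∀ j : Fin d, (((x + dir d i false) j : ℝ)) ^ 2
      = ((x j : ℝ)) ^ 2 + (if j = i then -(2 * ((x i : ℝ))) + 1 else 0) := by
    intro j
    by_cases hj : j = i
    · subst hj
      simp only [Pi.add_apply, dir, if_pos rfl, Bool.false_eq_true, if_false]
      push_cast
      ring
    · simp [Pi.add_apply, dir, hj]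
  unfold Sq
  rw [Finset.sum_congr rfl fun j _ => h j, Finset.sum_add_distrib,
    Finset.sum_ite_eq' Finset.univ i, if_pos (Finset.mem_univ i)]
  ring

/-- The comparison (superharmonic) function. -/
noncomputable def gf (d : ℕ) (L : ℝ) (x : Zd d) : ℝ :=
  (26 * L ^ 2) ^ (((d : ℝ) - 2) / 2) * (Sq x + 25 * L ^ 2) ^ (-(((d : ℝ) - 2) / 2))

lemma gf_nonneg (d : ℕ) (L : ℝ) (x : Zd d) (hL : 0 < L) : 0 ≤ gf d L x := by
  unfold gf
  have h1 : (0:ℝ) ≤ 26 * L ^ 2 := by positivity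
  have h2 : (0:ℝ) ≤ Sq x + 25 * L ^ 2 := by nlinarith [Sq_nonneg x]
  exact mul_nonneg (Real.rpow_nonneg h1 _) (Real.rpow_nonneg h2 _)

lemma gf_ge_one (d : ℕ) (hd : 3 ≤ d) (L : ℝ) (hL : (d : ℝ) ≤ L) {x : Zd d}
    (hx : x ∈ ballE d L) : 1 ≤ gf d L x := by
  have hd3 : (3:ℝ) ≤ (d:ℝ) := by exact_mod_cast hd
  have hL3 : (3:ℝ) ≤ L := le_trans hd3 hL
  have hq : 0 ≤ ((d:ℝ) - 2) / 2 := by linarith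
  have hS0 : 0 ≤ Sq x := Sq_nonneg x
  have h1 : euclid x ≤ L := hx
  rw [euclid_eq_sqrt_Sq] at h1
  have hSL : Sq x ≤ L ^ 2 := by
    nlinarith [Real.sq_sqrt hS0, Real.sqrt_nonneg (Sq x)]
  have hpos : 0 < Sq x + 25 * L ^ 2 := by nlinarith
  have hle : (Sq x + 25 * L ^ 2) ^ (((d:ℝ) - 2) / 2) ≤ (26 * L ^ 2) ^ (((d:ℝ) - 2) / 2) :=
    Real.rpow_le_rpow hpos.le (by nlinarith) hq
  unfold gf
  rw [Real.rpow_neg hpos.le, ← div_eq_mul_inv,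
    le_div_iff₀ (Real.rpow_pos_of_pos hpos _)]
  simpa using hle

set_option maxHeartbeats 2000000 in
/-- The key superharmonicity computation, in real-variable form. -/
lemma core (d : ℕ) (hd : 3 ≤ d) (L : ℝ) (hL : (d : ℝ) ≤ L) (y : Fin d → ℝ) (S : ℝ)
    (hSdef : S = ∑ i, (y i) ^ 2) :
    ∑ i : Fin d, ((S + 25 * L ^ 2 + 1 + 2 * y i) ^ (-(((d:ℝ) - 2) / 2))
        + (S + 25 * L ^ 2 + 1 - 2 * y i) ^ (-(((d:ℝ) - 2) / 2)))
      ≤ 2 * d * (S + 25 * L ^ 2) ^ (-(((d:ℝ) - 2) / 2)) := by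
  have hd3 : (3:ℝ) ≤ (d:ℝ) := by exact_mod_cast hd
  have hL3 : (3:ℝ) ≤ L := le_trans hd3 hL
  set q : ℝ := ((d:ℝ) - 2) / 2 with hqdef
  set p : ℝ := -q with hpdef
  clear_value q p
  have hq : 1/2 ≤ q := by rw [hqdef]; linarith
  have hp : p < 0 := by rw [hpdef]; linarith
  have hS0 : 0 ≤ S := by
    rw [hSdef]; exact Finset.sum_nonneg fun i _ => sq_nonneg _
  have hyS : ∀ i, (y i) ^ 2 ≤ S := by
    intro i
    rw [hSdef]
    exact Finset.single_le_sum (f := fun j => (y j)^2) (fun j _ => sq_nonneg _) (Finset.mem_univ i)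
  set σ : ℝ := Real.sqrt S with hσdef
  have hσ0 : 0 ≤ σ := hσdef ▸ Real.sqrt_nonneg S
  have hσ2 : σ ^ 2 = S := Real.sq_sqrt hS0
  set A : ℝ := S + 25 * L ^ 2 + 1 with hAdef
  set T : ℝ := 2 * σ with hTdef
  clear_value σ A T
  have hA0 : 0 < A := by rw [hAdef]; linarith [sq_nonneg L]
  have hT0 : 0 ≤ T := by rw [hTdef]; linarith
  have hTA : T < A := by rw [hTdef, hAdef, ← hσ2]; nlinarith [sq_nonneg (σ - 1), sq_nonneg L]
  have hAT : 0 < A - T := by linarith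
  have habs : ∀ i, |2 * y i| ≤ T := by
    intro i
    rw [hTdef, abs_mul, abs_two]
    have h1 : |y i| ≤ σ := by
      rw [hσdef, ← Real.sqrt_sq_eq_abs]
      exact Real.sqrt_le_sqrt (hyS i)
    linarith
  set b : ℝ := p * (p - 1) * A ^ (p - 2) with hbdef
  set C : ℝ := p * (p - 1) * (p - 2) * (p - 3) / 12 * (A - T) ^ (p - 4) with hCdef
  clear_value b C
  have h01 : 0 < p * (p - 1) := mul_pos_of_neg_of_neg hp (by linarith)
  have h23 : 0 < (p - 2) * (p - 3) := mul_pos_of_neg_of_neg (by linarith) (by linarith)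
  have hc4 : 0 < p * (p - 1) * (p - 2) * (p - 3) := by linarith [mul_pos h01 h23]
  have hC0 : 0 < C := by
    rw [hCdef]
    have := Real.rpow_pos_of_pos hAT (p - 4)
    positivity
  have hsum1 : ∑ i : Fin d, ((A + 2 * y i) ^ p + (A - 2 * y i) ^ p)
      ≤ ∑ i : Fin d, (2 * A ^ p + b * (2 * y i) ^ 2 + C * (2 * y i) ^ 4) :=
    Finset.sum_le_sum fun i _ => by
      rw [hbdef, hCdef]; exact quartic hp hT0 hTA (habs i)
  have hsum2 : ∑ i : Fin d, (2 * A ^ p + b * (2 * y i) ^ 2 + C * (2 * y i) ^ 4)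
      = 2 * d * A ^ p + 4 * b * S + 16 * C * (∑ i, (y i) ^ 4) := by
    rw [Finset.sum_add_distrib, Finset.sum_add_distrib, Finset.sum_const,
      ← Finset.mul_sum, ← Finset.mul_sum, Finset.card_univ, Fintype.card_fin]
    have e1 : ∑ i : Fin d, (2 * y i) ^ 2 = 4 * S := by
      rw [hSdef, Finset.mul_sum]
      exact Finset.sum_congr rfl fun i _ => by ring
    have e2 : ∑ i : Fin d, (2 * y i) ^ 4 = 16 * (∑ i, (y i) ^ 4) := by
      rw [Finset.mul_sum]
      exact Finset.sum_congr rfl fun i _ => by ring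
    rw [e1, e2, nsmul_eq_mul]
    ring
  have hy4 : ∑ i, (y i) ^ 4 ≤ S ^ 2 := by
    calc ∑ i, (y i) ^ 4 ≤ ∑ i, (y i) ^ 2 * S :=
        Finset.sum_le_sum fun i _ => by nlinarith [hyS i, sq_nonneg (y i)]
    _ = S ^ 2 := by rw [← Finset.sum_mul, ← hSdef]; ring
  have hy40 : 0 ≤ ∑ i, (y i) ^ 4 := Finset.sum_nonneg fun i _ => by positivity
  -- ratio bound
  have hratio : (A - T) ^ (p - 4) ≤ 2 * A ^ (p - 4) := by
    have h1 : A ^ (q + 4) ≤ 2 * (A - T) ^ (q + 4) := by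
      refine rpow_ratio hAT (by linarith) (by linarith) (d + 3) ?_ ?_
      · push_cast
        rw [hqdef]
        linarith
      · have e : A - (A - T) = T := by ring
        rw [e, hTdef, hAdef, ← hσ2]
        push_cast
        have hm : (d:ℝ) + 3 ≤ 2 * L := by linarith
        have h8 : ((d:ℝ) + 3) * (2 * σ) ≤ 2 * L * (2 * σ) :=
          mul_le_mul_of_nonneg_right hm (by linarith)
        have h9 : 8 * L * σ ≤ σ ^ 2 + 16 * L ^ 2 := by nlinarith [sq_nonneg (σ - 4 * L)]
        linarith [sq_nonneg L]
    have e1 : (A - T) ^ (p - 4) = ((A - T) ^ (q + 4))⁻¹ := by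
      rw [show p - 4 = -(q + 4) by rw [hpdef]; ring, Real.rpow_neg hAT.le]
    have e2 : A ^ (p - 4) = (A ^ (q + 4))⁻¹ := by
      rw [show p - 4 = -(q + 4) by rw [hpdef]; ring, Real.rpow_neg hA0.le]
    rw [e1, e2]
    have hX : 0 < A ^ (q + 4) := Real.rpow_pos_of_pos hA0 _
    have hY : 0 < (A - T) ^ (q + 4) := Real.rpow_pos_of_pos hAT _
    have h8 := one_div_le_one_div_of_le (show 0 < A ^ (q + 4) / 2 by positivity)
      (show A ^ (q + 4) / 2 ≤ (A - T) ^ (q + 4) by linarith)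
    rw [one_div, one_div] at h8
    calc ((A - T) ^ (q + 4))⁻¹ ≤ (A ^ (q + 4) / 2)⁻¹ := h8
    _ = 2 * (A ^ (q + 4))⁻¹ := by
        field_simp
  -- exponent bookkeeping
  have hc4q : p * (p-1) * (p-2) * (p-3) = q * (q+1) * (q+2) * (q+3) := by rw [hpdef]; ring
  have hpq2 : p * (p - 1) = q * (q + 1) := by rw [hpdef]; ring
  have eA3 : A ^ (p - 1) = A ^ (p - 4) * A ^ (3:ℕ) := by
    rw [← Real.rpow_natCast A 3, ← Real.rpow_add hA0]
    congr 1
    push_cast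
    ring
  have eA2 : A ^ (p - 2) = A ^ (p - 4) * A ^ (2:ℕ) := by
    rw [← Real.rpow_natCast A 2, ← Real.rpow_add hA0]
    congr 1
    push_cast
    ring
  have hP : 0 < A ^ (p - 4) := Real.rpow_pos_of_pos hA0 _
  -- numeric core inequality
  have hqL : (2/3) * ((q + 2) * (q + 3)) ≤ 25 * L ^ 2 := by
    have hq_le : q ≤ (L - 2) / 2 := by rw [hqdef]; linarith
    have m1 : q + 2 ≤ (L + 2) / 2 := by linarith
    have m2 : q + 3 ≤ (L + 4) / 2 := by linarith
    have m3 : 0 ≤ q + 2 := by linarith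
    have m4 : 0 ≤ q + 3 := by linarith
    have hLL : 3 * L ≤ L ^ 2 := by
      nlinarith [mul_nonneg (by linarith : (0:ℝ) ≤ L - 3) (by linarith : (0:ℝ) ≤ L)]
    have P := mul_le_mul m1 m2 m4 (by linarith : (0:ℝ) ≤ (L + 2)/2)
    nlinarith [P, hLL]
  have inner : 4 * q * (q+1) * A ^ (2:ℕ) * S + (8/3) * (q * (q+1) * (q+2) * (q+3)) * S ^ 2
      ≤ 2 * (2*q + 2) * q * A ^ (3:ℕ) := by
    have hSA : S ≤ A := by rw [hAdef]; linarith [sq_nonneg L]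
    have hS2A2 : S ^ 2 ≤ A ^ 2 := by nlinarith
    have h1 : (8/3) * (q * (q+1) * (q+2) * (q+3)) * S ^ 2
        ≤ 4 * q * (q+1) * A ^ 2 * (25 * L ^ 2 + 1) := by
      calc (8/3) * (q * (q+1) * (q+2) * (q+3)) * S ^ 2
          = (4 * q * (q+1)) * ((2/3) * ((q+2) * (q+3))) * S ^ 2 := by ring
      _ ≤ (4 * q * (q+1)) * (25 * L ^ 2) * S ^ 2 := by
          refine mul_le_mul_of_nonneg_right (mul_le_mul_of_nonneg_left hqL ?_) (sq_nonneg S)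
          exact mul_nonneg (by linarith) (by linarith)
      _ ≤ (4 * q * (q+1)) * (25 * L ^ 2) * A ^ 2 := by
          refine mul_le_mul_of_nonneg_left hS2A2 ?_
          exact mul_nonneg (mul_nonneg (by linarith) (by linarith)) (by positivity)
      _ ≤ 4 * q * (q+1) * A ^ 2 * (25 * L ^ 2 + 1) := by
          have h0 : 0 ≤ 4 * q * (q+1) * A ^ 2 :=
            mul_nonneg (mul_nonneg (by linarith) (by linarith)) (sq_nonneg A)
          linarith [h0]
    have hA3' : 2 * (2*q + 2) * q * A ^ (3:ℕ)
        = 4 * q * (q+1) * A ^ (2:ℕ) * S + 4 * q * (q+1) * A ^ (2:ℕ) * (25 * L ^ 2 + 1) := by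
      rw [hAdef]; ring
    linarith [h1, hA3']
  have claim2 : 4 * b * S + 16 * C * (∑ i, (y i) ^ 4) ≤ 2 * d * q * A ^ (p - 1) := by
    have hCle : C ≤ q * (q+1) * (q+2) * (q+3) / 6 * A ^ (p - 4) := by
      rw [hCdef]
      calc p * (p-1) * (p-2) * (p-3) / 12 * (A - T) ^ (p - 4)
          ≤ p * (p-1) * (p-2) * (p-3) / 12 * (2 * A ^ (p - 4)) := by
            apply mul_le_mul_of_nonneg_left hratio (by linarith)
      _ = q * (q+1) * (q+2) * (q+3) / 6 * A ^ (p - 4) := by rw [← hc4q]; ring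
    have h16 : 16 * C * (∑ i, (y i) ^ 4)
        ≤ 16 * (q * (q+1) * (q+2) * (q+3) / 6 * A ^ (p - 4)) * S ^ 2 := by
      calc 16 * C * (∑ i, (y i) ^ 4) ≤ 16 * C * S ^ 2 :=
          mul_le_mul_of_nonneg_left hy4 (by linarith)
      _ ≤ 16 * (q * (q+1) * (q+2) * (q+3) / 6 * A ^ (p - 4)) * S ^ 2 :=
          mul_le_mul_of_nonneg_right (by linarith) (sq_nonneg S)
    have hb4 : 4 * b * S = 4 * (q * (q+1)) * (A ^ (p - 4) * A ^ (2:ℕ)) * S := by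
      rw [hbdef, eA2, hpq2]; ring
    calc 4 * b * S + 16 * C * (∑ i, (y i) ^ 4)
        ≤ 4 * (q * (q+1)) * (A ^ (p - 4) * A ^ (2:ℕ)) * S
          + 16 * (q * (q+1) * (q+2) * (q+3) / 6 * A ^ (p - 4)) * S ^ 2 := by
          rw [← hb4]; linarith [h16]
    _ = A ^ (p - 4) * (4 * q * (q+1) * A ^ (2:ℕ) * S
          + (8/3) * (q * (q+1) * (q+2) * (q+3)) * S ^ 2) := by ring
    _ ≤ A ^ (p - 4) * (2 * (2*q + 2) * q * A ^ (3:ℕ)) :=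
        mul_le_mul_of_nonneg_left inner hP.le
    _ = 2 * d * q * A ^ (p - 1) := by
        rw [eA3, show (d:ℝ) = 2*q + 2 by rw [hqdef]; ring]
        ring
  have hgain : A ^ p + q * A ^ (p - 1) ≤ (S + 25 * L ^ 2) ^ p := by
    have hs : 0 < S + 25 * L ^ 2 := by linarith [sq_nonneg L]
    have hg := gain hp hs
    rw [show S + 25 * L ^ 2 + 1 = A from hAdef.symm] at hg
    have hq' : q = -p := by rw [hpdef]; ring
    rw [hq']
    linarith [hg]
  have h2d : (0:ℝ) ≤ 2 * d := by positivity
  have hfinal := mul_le_mul_of_nonneg_left hgain h2d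
  calc ∑ i : Fin d, ((A + 2 * y i) ^ p + (A - 2 * y i) ^ p)
      ≤ 2 * d * A ^ p + 4 * b * S + 16 * C * (∑ i, (y i) ^ 4) := by
        rw [← hsum2]; exact hsum1
  _ ≤ 2 * d * A ^ p + 2 * d * q * A ^ (p - 1) := by linarith [claim2]
  _ = 2 * d * (A ^ p + q * A ^ (p - 1)) := by ring
  _ ≤ 2 * d * (S + 25 * L ^ 2) ^ p := hfinal

lemma superharm (d : ℕ) (hd : 3 ≤ d) (L : ℝ) (hL : (d : ℝ) ≤ L) (x : Zd d) :
    ∑ i : Fin d, ∑ s : Bool, gf d L (x + dir d i s) ≤ 2 * d * gf d L x := by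
  have hd3 : (3:ℝ) ≤ (d:ℝ) := by exact_mod_cast hd
  have hL3 : (3:ℝ) ≤ L := le_trans hd3 hL
  have hcore := core d hd L hL (fun i => ((x i : ℝ))) (Sq x) rfl
  have e1 : ∀ i : Fin d, ∑ s : Bool, gf d L (x + dir d i s)
      = (26 * L ^ 2) ^ (((d:ℝ) - 2) / 2) *
        ((Sq x + 25 * L ^ 2 + 1 + 2 * ((x i : ℝ))) ^ (-(((d:ℝ) - 2) / 2))
         + (Sq x + 25 * L ^ 2 + 1 - 2 * ((x i : ℝ))) ^ (-(((d:ℝ) - 2) / 2))) := by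
    intro i
    rw [Fintype.sum_bool]
    unfold gf
    rw [Sq_add_dir_true i x, Sq_add_dir_false i x,
      show Sq x + 2 * ((x i : ℝ)) + 1 + 25 * L ^ 2
        = Sq x + 25 * L ^ 2 + 1 + 2 * ((x i : ℝ)) by ring,
      show Sq x - 2 * ((x i : ℝ)) + 1 + 25 * L ^ 2
        = Sq x + 25 * L ^ 2 + 1 - 2 * ((x i : ℝ)) by ring]
    ring
  calc ∑ i : Fin d, ∑ s : Bool, gf d L (x + dir d i s)
      = (26 * L ^ 2) ^ (((d:ℝ) - 2) / 2) *
        ∑ i : Fin d, ((Sq x + 25 * L ^ 2 + 1 + 2 * ((x i : ℝ))) ^ (-(((d:ℝ) - 2) / 2))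
         + (Sq x + 25 * L ^ 2 + 1 - 2 * ((x i : ℝ))) ^ (-(((d:ℝ) - 2) / 2))) := by
        rw [Finset.mul_sum]
        exact Finset.sum_congr rfl fun i _ => e1 i
  _ ≤ (26 * L ^ 2) ^ (((d:ℝ) - 2) / 2) *
        (2 * d * (Sq x + 25 * L ^ 2) ^ (-(((d:ℝ) - 2) / 2))) := by
        apply mul_le_mul_of_nonneg_left hcore (Real.rpow_nonneg (by positivity) _)
  _ = 2 * d * gf d L x := by unfold gf; ring

lemma gf_le (d : ℕ) (hd : 3 ≤ d) (L : ℝ) (hL : (d : ℝ) ≤ L) (x : Zd d)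
    (hx : 0 < euclid x) : gf d L x ≤ (6 * L / euclid x) ^ (d - 2) := by
  have hd3 : (3:ℝ) ≤ (d:ℝ) := by exact_mod_cast hd
  have hL3 : (3:ℝ) ≤ L := le_trans hd3 hL
  have hq : 0 ≤ ((d:ℝ) - 2) / 2 := by linarith
  have hS0 : 0 ≤ Sq x := Sq_nonneg x
  have hSpos : 0 < Sq x := by
    rcases lt_or_eq_of_le hS0 with h | h
    · exact h
    · exfalso
      rw [euclid_eq_sqrt_Sq, ← h, Real.sqrt_zero] at hx
      exact lt_irrefl 0 hx
  have hσ2 : (euclid x) ^ 2 = Sq x := by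
    rw [euclid_eq_sqrt_Sq]; exact Real.sq_sqrt hS0
  have h1 : (26 * L ^ 2) ^ (((d:ℝ) - 2) / 2) ≤ (36 * L ^ 2) ^ (((d:ℝ) - 2) / 2) :=
    Real.rpow_le_rpow (by positivity) (by nlinarith) hq
  have h2 : (Sq x + 25 * L ^ 2) ^ (-(((d:ℝ) - 2) / 2)) ≤ (Sq x) ^ (-(((d:ℝ) - 2) / 2)) :=
    Real.rpow_le_rpow_of_nonpos hSpos (by nlinarith) (by linarith)
  have key : (36 * L ^ 2) ^ (((d:ℝ) - 2) / 2) * (Sq x) ^ (-(((d:ℝ) - 2) / 2))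
      = (6 * L / euclid x) ^ (d - 2) := by
    rw [Real.rpow_neg hSpos.le, ← div_eq_mul_inv,
      ← Real.div_rpow (by positivity) hSpos.le]
    have e1 : 36 * L ^ 2 / Sq x = (6 * L / euclid x) ^ 2 := by
      rw [div_pow, hσ2]
      congr 1
      ring
    rw [e1]
    have hr0 : 0 ≤ 6 * L / euclid x := by positivity
    rw [← Real.rpow_natCast (6 * L / euclid x) 2, ← Real.rpow_mul hr0]
    rw [show ((2:ℕ):ℝ) * (((d:ℝ) - 2) / 2) = (((d - 2 : ℕ)):ℝ) by
      rw [Nat.cast_sub (by omega : 2 ≤ d)]; push_cast; ring]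
    exact Real.rpow_natCast _ (d - 2)
  calc gf d L x ≤ (36 * L ^ 2) ^ (((d:ℝ) - 2) / 2) * (Sq x) ^ (-(((d:ℝ) - 2) / 2)) := by
        unfold gf
        exact mul_le_mul h1 h2 (Real.rpow_nonneg (by nlinarith) _) (Real.rpow_nonneg (by positivity) _)
  _ = (6 * L / euclid x) ^ (d - 2) := key

/-! ### Probability estimates -/

lemma hitProb_nonneg (d : ℕ) (K : Set (Zd d)) : ∀ n x, 0 ≤ hitProb d K n x := by
  intro n
  induction n with
  | zero =>
      intro x
      simp only [hitProb]
      split <;> norm_num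
  | succ n ih =>
      intro x
      simp only [hitProb]
      split
      · norm_num
      · refine mul_nonneg (by positivity) ?_
        exact Finset.sum_nonneg fun i _ => Finset.sum_nonneg fun s _ => ih _

lemma hitProb_le_one (d : ℕ) (hd : 0 < d) (K : Set (Zd d)) : ∀ n x, hitProb d K n x ≤ 1 := by
  intro n
  induction n with
  | zero =>
      intro x
      simp only [hitProb]
      split <;> norm_num
  | succ n ih =>
      intro x
      simp only [hitProb]
      split
      · norm_num
      · have h1 : ∑ i : Fin d, ∑ s : Bool, hitProb d K n (x + dir d i s) ≤ (d:ℝ) * 2 := by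
          calc ∑ i : Fin d, ∑ s : Bool, hitProb d K n (x + dir d i s)
              ≤ ∑ _i : Fin d, ∑ _s : Bool, (1:ℝ) :=
                Finset.sum_le_sum fun i _ => Finset.sum_le_sum fun s _ => ih _
          _ = (d:ℝ) * 2 := by
              simp [Finset.sum_const, Finset.card_univ, mul_comm]
        have hd0 : (0:ℝ) < 2 * d := by positivity
        calc (2 * (d:ℝ))⁻¹ * ∑ i : Fin d, ∑ s : Bool, hitProb d K n (x + dir d i s)
            ≤ (2 * (d:ℝ))⁻¹ * ((d:ℝ) * 2) := by
              apply mul_le_mul_of_nonneg_left h1 (by positivity)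
        _ = 1 := by field_simp
lemma hitProb_le_gf (d : ℕ) (hd : 3 ≤ d) (L : ℝ) (hL : (d : ℝ) ≤ L) :
    ∀ n x, hitProb d (ballE d L) n x ≤ gf d L x := by
  have hL0 : 0 < L := by
    have : (3:ℝ) ≤ (d:ℝ) := by exact_mod_cast hd
    linarith
  intro n
  induction n with
  | zero =>
      intro x
      simp only [hitProb]
      split_ifs with hx
      · exact gf_ge_one d hd L hL hx
      · exact gf_nonneg d L x hL0
  | succ n ih =>
      intro x
      simp only [hitProb]
      split_ifs with hx
      · exact gf_ge_one d hd L hL hx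
      · have hd0 : ((d:ℝ)) ≠ 0 := by positivity
        calc (2 * (d:ℝ))⁻¹ * ∑ i : Fin d, ∑ s : Bool, hitProb d (ballE d L) n (x + dir d i s)
            ≤ (2 * (d:ℝ))⁻¹ * ∑ i : Fin d, ∑ s : Bool, gf d L (x + dir d i s) := by
              apply mul_le_mul_of_nonneg_left _ (by positivity)
              exact Finset.sum_le_sum fun i _ => Finset.sum_le_sum fun s _ => ih _
        _ ≤ (2 * (d:ℝ))⁻¹ * (2 * d * gf d L x) := by
              apply mul_le_mul_of_nonneg_left (superharm d hd L hL x) (by positivity)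
        _ = gf d L x := by field_simp

/-- Entrance probability upper bound (Lemma 1.1, (1.6)): there is a dimension-independent
constant `c ≥ 1` with `P_x[H_{B(0,L)} < ∞] ≤ (c L / |x|)^{d-2} ∧ 1` for all `L ≥ d` and
`x ∈ ℤ^d` (the right-hand side being interpreted in `[0,∞]`, so that it equals `1` when
`x = 0`). -/
theorem hitting_prob_upper_bound :
    ∃ c : ℝ, 1 ≤ c ∧ ∀ d : ℕ, 3 ≤ d → ∀ L : ℝ, (d : ℝ) ≤ L → ∀ x : Zd d,
      ENNReal.ofReal (hitProbInfty d (ballE d L) x) ≤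
        min ((ENNReal.ofReal (c * L) / ENNReal.ofReal (euclid x)) ^ (d - 2)) 1 := by
  refine ⟨6, by norm_num, ?_⟩
  intro d hd L hL x
  have hd3 : (3:ℝ) ≤ (d:ℝ) := by exact_mod_cast hd
  have hL3 : (3:ℝ) ≤ L := le_trans hd3 hL
  have hd0 : 0 < d := by omega
  have hP1 : hitProbInfty d (ballE d L) x ≤ 1 :=
    ciSup_le fun n => hitProb_le_one d hd0 (ballE d L) n x
  refine le_min ?_ (ENNReal.ofReal_le_one.mpr hP1)
  by_cases hx : euclid x = 0
  · rw [hx]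
    have htop : ENNReal.ofReal (6 * L) / ENNReal.ofReal 0 = ⊤ := by
      rw [ENNReal.ofReal_zero]
      exact ENNReal.div_zero (by simp [ENNReal.ofReal_eq_zero]; linarith)
    rw [htop, ENNReal.top_pow (by omega : d - 2 ≠ 0)]
    exact le_top
  · have hx' : 0 < euclid x :=
      lt_of_le_of_ne (Real.sqrt_nonneg _) (Ne.symm hx)
    have hb : hitProbInfty d (ballE d L) x ≤ (6 * L / euclid x) ^ (d - 2) :=
      le_trans (ciSup_le fun n => hitProb_le_gf d hd L hL n x)
        (gf_le d hd L hL x hx')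
    calc ENNReal.ofReal (hitProbInfty d (ballE d L) x)
        ≤ ENNReal.ofReal ((6 * L / euclid x) ^ (d - 2)) := ENNReal.ofReal_le_ofReal hb
    _ = (ENNReal.ofReal (6 * L / euclid x)) ^ (d - 2) := by
        rw [ENNReal.ofReal_pow (by positivity)]
    _ = (ENNReal.ofReal (6 * L) / ENNReal.ofReal (euclid x)) ^ (d - 2) := by
        rw [ENNReal.ofReal_div_of_pos hx']
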